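/- Let S and T be trees and e = (s,t) ∈ S ⊗ T with s a node of S and t a node of T (a 'fork'). Then there are exactly two maximal tuples strictly below e in S ⊗ T, namely s × t^↑ and s^↑ × t; in particular, neither s × t^↑ ≤ s^↑ × t nor s^↑ × t ≤ s × t^↑ holds in S ⊗ T. -/
import Mathlib


universe u

namespace BroadPaper

/-- A broad relation on `X`: a relation between finite unordered tuples
(multisets) over `X` and elements of `X`. -/
abbrev Rel (X : Type u) : Type u := Multiset X → X → Prop

variable {X : Type u} {Y : Type u} {A : Type u} {B : Type u} {Z : Type u}

/-- Broad transitivity: if `f₁ ⋯ fₙ ≤ e` and `g̲ᵢ ≤ fᵢ` then `g̲₁ ⋯ g̲ₙ ≤ e`,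
encoded via a multiset of pairs `(g̲ᵢ, fᵢ)`. -/
def BTrans (r : Rel X) : Prop :=
  ∀ (p : Multiset (Multiset X × X)) (e : X),
    r (p.map Prod.snd) e → (∀ q ∈ p, r q.1 q.2) → r ((p.map Prod.fst).sum) e

/-- A pre-broad poset: reflexivity plus broad transitivity. -/
def IsPreBroad (r : Rel X) : Prop := (∀ e : X, r {e} e) ∧ BTrans r

/-- A (commutative) broad poset: a pre-broad poset satisfying antisymmetry. -/
def IsBroad (r : Rel X) : Prop :=
  IsPreBroad r ∧ ∀ e f : X, r {e} f → r {f} e → e = f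

/-- Simplicity: letters in any broad relation are pairwise distinct. -/
def Simple (r : Rel X) : Prop := ∀ fs e, r fs e → fs.Nodup

/-- The descendant relation `f ≤_d e`. -/
def descends (r : Rel X) (f e : X) : Prop := ∃ fs, r fs e ∧ f ∈ fs

def Comparable (r : Rel X) (f g : X) : Prop := descends r f g ∨ descends r g f

def Incomp (r : Rel X) (f g : X) : Prop := ¬ descends r f g ∧ ¬ descends r g f

/-- Blockwise extension of a broad relation to a relation between tuples:
`fs ≤ es` iff `fs = f̲₁ ⋯ f̲ₖ`, `es = e₁ ⋯ eₖ` with `f̲ᵢ ≤ eᵢ`. -/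
def tupleLE (r : Rel X) (fs es : Multiset X) : Prop :=
  ∃ p : Multiset (Multiset X × X),
    p.map Prod.snd = es ∧ (p.map Prod.fst).sum = fs ∧ ∀ q ∈ p, r q.1 q.2

/-- A leaf: no tuple strictly below `e`. -/
def IsLeaf (r : Rel X) (e : X) : Prop := ¬ ∃ fs, r fs e ∧ fs ≠ ({e} : Multiset X)

/-- `fs` is the maximum tuple strictly below `e` (written `e^↑`).
If `fs ≠ 0`, `e` is a node; if `fs = 0`, `e` is a stump. -/
def upTuple (r : Rel X) (e : X) (fs : Multiset X) : Prop :=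
  (r fs e ∧ fs ≠ ({e} : Multiset X)) ∧
    ∀ gs, r gs e → gs ≠ ({e} : Multiset X) → tupleLE r gs fs

def IsStump (r : Rel X) (e : X) : Prop := upTuple r e 0

/-- A dendroidally ordered set (tree): a finite simple broad poset in which
every element is a leaf, node or stump, with a `≤_d`-maximum (root). -/
def IsTree (r : Rel X) : Prop :=
  IsBroad r ∧ Finite X ∧ Simple r ∧
    (∀ e : X, IsLeaf r e ∨ ∃ fs, upTuple r e fs) ∧
    ∃ rt : X, ∀ e, descends r e rt

def IsMaxEl (r : Rel X) (e : X) : Prop := ∀ s, descends r e s → s = e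

/-- A forestially ordered set (forest): each element has a unique
`≤_d`-maximal element above it. -/
def IsForest (r : Rel X) : Prop :=
  IsBroad r ∧ Finite X ∧ Simple r ∧
    (∀ e : X, IsLeaf r e ∨ ∃ fs, upTuple r e fs) ∧
    ∀ e : X, ∃! rt : X, IsMaxEl r rt ∧ descends r e rt

/-- A map of broad posets: preserves broad relations (letterwise on tuples). -/
def BroadHom (r : Rel X) (r' : Rel Y) (φ : X → Y) : Prop :=
  ∀ fs e, r fs e → r' (fs.map φ) (φ e)

/-- `rs` is the root tuple: the tuple of `≤_d`-maximal elements (no repeats). -/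
def IsRootTuple (r : Rel X) (rs : Multiset X) : Prop :=
  rs.Nodup ∧ ∀ x, x ∈ rs ↔ IsMaxEl r x

/-- Independent map of forests: `φ(r̲_F)·e̲ ≤ r̲_{F'}` for some tuple `e̲`. -/
def Independent (r : Rel X) (r' : Rel Y) (φ : X → Y) : Prop :=
  ∃ (rs : Multiset X) (rs' : Multiset Y) (es : Multiset Y),
    IsRootTuple r rs ∧ IsRootTuple r' rs' ∧ tupleLE r' (rs.map φ + es) rs'

/-- The (pre-)broad relation generated by a set of generating relations:
closure under reflexivity and broad transitivity. -/
inductive GenRel (gen : Rel X) : Rel X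
  | of : ∀ fs e, gen fs e → GenRel gen fs e
  | refl : ∀ e, GenRel gen {e} e
  | btrans : ∀ (p : Multiset (Multiset X × X)) (e : X),
      GenRel gen (p.map Prod.snd) e → (∀ q ∈ p, GenRel gen q.1 q.2) →
      GenRel gen ((p.map Prod.fst).sum) e

/-- Generators of the tensor product `S ⊗ T`: relations `s̲ × t ≤ (s,t)` and
`s × t̲ ≤ (s,t)`. -/
def tensorGen (rS : Rel A) (rT : Rel B) : Rel (A × B) := fun xs x =>
  (∃ as, rS as x.1 ∧ xs = as.map fun a => (a, x.2)) ∨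
  (∃ bs, rT bs x.2 ∧ xs = bs.map fun b => (x.1, b))

/-- The tensor product broad relation on `A × B`. -/
def tensorRel (rS : Rel A) (rT : Rel B) : Rel (A × B) := GenRel (tensorGen rS rT)

/-- Product of tuples: all pairs from `as` and `bs`. -/
def mprod (as : Multiset A) (bs : Multiset B) : Multiset (A × B) :=
  as.bind fun a => bs.map fun b => (a, b)

end BroadPaper

namespace BroadPaper

section AuxMultiset

variable {X : Type u} {Y : Type u} [DecidableEq X] [DecidableEq Y]

lemma mem_msum {S : Multiset (Multiset X)} {a : X} : a ∈ S.sum ↔ ∃ s ∈ S, a ∈ s :=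
  Multiset.mem_join

lemma map_msum (g : X → Y) (S : Multiset (Multiset X)) :
    S.sum.map g = (S.map (Multiset.map g)).sum := by
  induction S using Multiset.induction_on with
  | empty => simp
  | cons a S ih => simp [ih]

lemma sum_fst_le_map_snd {p : Multiset (Multiset X × X)}
    (h : ∀ q ∈ p, q.1 ≤ ({q.2} : Multiset X)) :
    (p.map Prod.fst).sum ≤ p.map Prod.snd := by
  induction p using Multiset.induction_on with
  | empty => simp
  | cons a p ih =>
      simp only [Multiset.map_cons, Multiset.sum_cons]
      rw [← Multiset.singleton_add]
      exact add_le_add (h a (Multiset.mem_cons_self a p))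
        (ih fun q hq => h q (Multiset.mem_cons_of_mem hq))

lemma sum_fst_eq_map_snd {p : Multiset (Multiset X × X)}
    (h : ∀ q ∈ p, q.1 = ({q.2} : Multiset X)) :
    (p.map Prod.fst).sum = p.map Prod.snd := by
  induction p using Multiset.induction_on with
  | empty => simp
  | cons a p ih =>
      simp only [Multiset.map_cons, Multiset.sum_cons]
      rw [h a (Multiset.mem_cons_self a p),
        ih fun q hq => h q (Multiset.mem_cons_of_mem hq), Multiset.singleton_add]

lemma map_eq_add_inv {f : X → Y} {s : Multiset X} {a b : Multiset Y}
    (h : s.map f = a + b) : ∃ s₁ s₂, s = s₁ + s₂ ∧ s₁.map f = a ∧ s₂.map f = b := by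
  induction a using Multiset.induction_on generalizing s with
  | empty => exact ⟨0, s, by simp, by simp, by simpa using h⟩
  | cons x a ih =>
      have hx : x ∈ s.map f := by
        rw [h]; exact Multiset.mem_of_le (Multiset.le_add_right _ _) (Multiset.mem_cons_self x a)
      obtain ⟨y, hy, hfy⟩ := Multiset.mem_map.1 hx
      have h' : (s.erase y).map f = a + b := by
        have hse : s = y ::ₘ s.erase y := (Multiset.cons_erase hy).symm
        rw [hse, Multiset.map_cons, hfy, Multiset.cons_add] at h
        exact (Multiset.cons_inj_right _).1 h
      obtain ⟨s₁, s₂, hs, h1, h2⟩ := ih h'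
      refine ⟨y ::ₘ s₁, s₂, ?_, ?_, h2⟩
      · rw [Multiset.cons_add, ← hs, Multiset.cons_erase hy]
      · rw [Multiset.map_cons, hfy, h1]

end AuxMultiset

section AuxBroad

variable {X : Type u} [DecidableEq X] {r : Rel X}

lemma descends_refl (hrefl : ∀ e : X, r {e} e) (e : X) : descends r e e :=
  ⟨{e}, hrefl e, Multiset.mem_singleton_self e⟩

lemma subst_rel (hrefl : ∀ e : X, r {e} e) (hb : BTrans r)
    {fs gs : Multiset X} {a b : X} (h1 : r fs b) (ha : a ∈ fs) (h2 : r gs a) :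
    r (gs + fs.erase a) b := by
  have key := hb ((gs, a) ::ₘ (fs.erase a).map (fun x => ({x}, x))) b ?_ ?_
  · have h3 : (((gs, a) ::ₘ (fs.erase a).map fun x => (({x} : Multiset X), x)).map
        Prod.fst).sum = gs + fs.erase a := by
      simp [Multiset.map_map, Function.comp_def, Multiset.sum_map_singleton]
    rwa [h3] at key
  · have h3 : ((gs, a) ::ₘ (fs.erase a).map fun x => (({x} : Multiset X), x)).map
        Prod.snd = fs := by
      simp [Multiset.map_map, Function.comp_def, Multiset.cons_erase ha]
    rwa [h3]
  · rintro q hq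
    rcases Multiset.mem_cons.1 hq with rfl | hq
    · exact h2
    · obtain ⟨x, _, rfl⟩ := Multiset.mem_map.1 hq
      exact hrefl x

lemma mem_rel_eq_singleton (hrefl : ∀ e : X, r {e} e) (hb : BTrans r) (hsimp : Simple r)
    {gs : Multiset X} {e : X} (h : r gs e) (he : e ∈ gs) : gs = {e} := by
  have h2 := subst_rel hrefl hb h he h
  have hnd := hsimp _ _ h2
  rw [Multiset.nodup_add] at hnd
  by_cases h0 : gs.erase e = 0
  · rw [← Multiset.cons_erase he, h0, Multiset.cons_zero]
  · obtain ⟨x, hx⟩ := Multiset.exists_mem_of_ne_zero h0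
    exact absurd (Multiset.disjoint_left.1 hnd.2.2
      (Multiset.mem_of_le (Multiset.erase_le e gs) hx)) (not_not_intro hx)

lemma descends_trans (hrefl : ∀ e : X, r {e} e) (hb : BTrans r) {a b c : X}
    (h1 : descends r a b) (h2 : descends r b c) : descends r a c := by
  obtain ⟨gs, hgs, hag⟩ := h1
  obtain ⟨fs, hfs, hbf⟩ := h2
  exact ⟨gs + fs.erase b, subst_rel hrefl hb hfs hbf hgs, Multiset.mem_add.2 (Or.inl hag)⟩

lemma descends_antisymm (hbroad : IsBroad r) (hsimp : Simple r)
    {a b : X} (hab : descends r a b) (hba : descends r b a) : a = b := by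
  obtain ⟨fs, hfs, ha⟩ := hab
  obtain ⟨gs, hgs, hb⟩ := hba
  obtain ⟨⟨hrefl, hbt⟩, hanti⟩ := hbroad
  have h2 : r (gs + fs.erase a) b := subst_rel hrefl hbt hfs ha hgs
  have h3 : b ∈ gs + fs.erase a := Multiset.mem_add.2 (Or.inl hb)
  have h4 := mem_rel_eq_singleton hrefl hbt hsimp h2 h3
  have hcard : Multiset.card gs + Multiset.card (fs.erase a) = 1 := by
    rw [← Multiset.card_add, h4, Multiset.card_singleton]
  have hgsc : Multiset.card gs ≠ 0 := by
    intro h0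
    rw [Multiset.card_eq_zero] at h0
    rw [h0] at hb
    exact absurd hb (Multiset.notMem_zero b)
  have hgs1 : Multiset.card gs = 1 := by omega
  have hfse : Multiset.card (fs.erase a) = 0 := by omega
  obtain ⟨x, hx⟩ := Multiset.card_eq_one.1 hgs1
  have hgseq : gs = {b} := by
    rw [hx] at hb ⊢
    rw [Multiset.mem_singleton] at hb
    rw [hb]
  have hfseq : fs = {a} := by
    rw [Multiset.card_eq_zero] at hfse
    rw [← Multiset.cons_erase ha, hfse, Multiset.cons_zero]
  rw [hfseq] at hfs
  rw [hgseq] at hgs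
  exact hanti a b hfs hgs

lemma tuple_mem_incomp (hpre : IsPreBroad r) (hsimp : Simple r)
    {ss : Multiset X} {s a a' : X} (h : r ss s) (ha : a ∈ ss) (ha' : a' ∈ ss)
    (hd : descends r a a') : a = a' := by
  by_contra hne
  obtain ⟨hsM, hrel, hmem⟩ := hd
  have h2 : r (hsM + ss.erase a') s := subst_rel hpre.1 hpre.2 h ha' hrel
  have hnd := hsimp _ _ h2
  rw [Multiset.nodup_add] at hnd
  exact Multiset.disjoint_left.1 hnd.2.2 hmem ((Multiset.mem_erase_of_ne hne).2 ha)

lemma tupleLE_cons {f₁ f₂ gs : Multiset X} {g : X} (h1 : r f₁ g) (h2 : tupleLE r f₂ gs) :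
    tupleLE r (f₁ + f₂) (g ::ₘ gs) := by
  obtain ⟨p, hsnd, hfst, hrel⟩ := h2
  refine ⟨(f₁, g) ::ₘ p, by simp [hsnd], by simp [hfst], ?_⟩
  rintro q hq
  rcases Multiset.mem_cons.1 hq with rfl | hq
  · exact h1
  · exact hrel q hq

lemma tupleLE_add_inv {fs g₁ g₂ : Multiset X} (h : tupleLE r fs (g₁ + g₂)) :
    ∃ f₁ f₂, fs = f₁ + f₂ ∧ tupleLE r f₁ g₁ ∧ tupleLE r f₂ g₂ := by
  obtain ⟨p, hsnd, hfst, hrel⟩ := h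
  obtain ⟨p₁, p₂, rfl, h1, h2⟩ := map_eq_add_inv hsnd
  refine ⟨(p₁.map Prod.fst).sum, (p₂.map Prod.fst).sum, by rw [← hfst]; simp,
    ⟨p₁, h1, rfl, fun q hq => hrel q (Multiset.mem_add.2 (Or.inl hq))⟩,
    ⟨p₂, h2, rfl, fun q hq => hrel q (Multiset.mem_add.2 (Or.inr hq))⟩⟩

lemma tupleLE_trans_aux (hb : BTrans r) (q : Multiset (Multiset X × X)) :
    (∀ x ∈ q, r x.1 x.2) →
      ∀ fs, tupleLE r fs ((q.map Prod.fst).sum) → tupleLE r fs (q.map Prod.snd) := by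
  induction q using Multiset.induction_on with
  | empty =>
      intro _ fs h
      obtain ⟨p, hsnd, hfst, hrel⟩ := h
      simp only [Multiset.map_zero, Multiset.sum_zero] at hsnd ⊢
      rw [Multiset.map_eq_zero] at hsnd
      rw [hsnd] at hfst
      simp only [Multiset.map_zero, Multiset.sum_zero] at hfst
      exact ⟨0, by simp, by simp [← hfst], by simp⟩
  | cons dq q ih =>
      intro hq fs h
      rw [Multiset.map_cons, Multiset.sum_cons] at h
      obtain ⟨f₁, f₂, rfl, hle1, hle2⟩ := tupleLE_add_inv h
      have hr1 : r f₁ dq.2 := by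
        obtain ⟨p₁, hsnd, hfst, hrel⟩ := hle1
        have := hb p₁ dq.2 (by rw [hsnd]; exact hq dq (Multiset.mem_cons_self dq q)) hrel
        rwa [hfst] at this
      have hle2' := ih (fun x hx => hq x (Multiset.mem_cons_of_mem hx)) f₂ hle2
      rw [Multiset.map_cons]
      exact tupleLE_cons hr1 hle2'

lemma tupleLE_trans (hb : BTrans r) {fs gs hs : Multiset X}
    (h1 : tupleLE r fs gs) (h2 : tupleLE r gs hs) : tupleLE r fs hs := by
  obtain ⟨q, hsnd, hfst, hrel⟩ := h2
  rw [← hsnd]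
  exact tupleLE_trans_aux hb q hrel fs (by rwa [hfst])

end AuxBroad

section AuxTensor

variable {A : Type u} {B : Type u} [DecidableEq A] [DecidableEq B]
variable {rS : Rel A} {rT : Rel B}

lemma tensor_btrans : BTrans (tensorRel rS rT) :=
  fun p e h1 h2 => GenRel.btrans p e h1 h2

lemma tensor_descends (hS : IsPreBroad rS) (hT : IsPreBroad rT)
    {fs : Multiset (A × B)} {e : A × B} (h : tensorRel rS rT fs e) :
    ∀ x ∈ fs, descends rS x.1 e.1 ∧ descends rT x.2 e.2 := by
  induction h with
  | of fs e hgen =>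
      intro x hx
      rcases hgen with ⟨as, has, rfl⟩ | ⟨bs, hbs, rfl⟩
      · obtain ⟨a, ha, rfl⟩ := Multiset.mem_map.1 hx
        exact ⟨⟨as, has, ha⟩, descends_refl hT.1 e.2⟩
      · obtain ⟨b, hb, rfl⟩ := Multiset.mem_map.1 hx
        exact ⟨descends_refl hS.1 e.1, ⟨bs, hbs, hb⟩⟩
  | refl e =>
      intro x hx
      rw [Multiset.mem_singleton] at hx
      subst hx
      exact ⟨descends_refl hS.1 x.1, descends_refl hT.1 x.2⟩
  | btrans p e h1 h2 ih1 ih2 =>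
      intro x hx
      obtain ⟨bk, hbk, hxb⟩ := mem_msum.1 hx
      obtain ⟨q, hq, rfl⟩ := Multiset.mem_map.1 hbk
      obtain ⟨d1, d2⟩ := ih2 q hq x hxb
      obtain ⟨e1, e2⟩ := ih1 q.2 (Multiset.mem_map_of_mem _ hq)
      exact ⟨descends_trans hS.1 hS.2 d1 e1, descends_trans hT.1 hT.2 d2 e2⟩

lemma tensor_mem_eq_singleton (hS : IsTree rS) (hT : IsTree rT)
    {fs : Multiset (A × B)} {e : A × B}
    (h : tensorRel rS rT fs e) : e ∈ fs → fs = {e} := by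
  have hSp : IsPreBroad rS := hS.1.1
  have hTp : IsPreBroad rT := hT.1.1
  induction h with
  | of fs e hgen =>
      intro he
      rcases hgen with ⟨as, has, rfl⟩ | ⟨bs, hbs, rfl⟩
      · obtain ⟨a, ha, hae⟩ := Multiset.mem_map.1 he
        have ha1 : a = e.1 := congrArg Prod.fst hae
        subst ha1
        have : as = {e.1} := mem_rel_eq_singleton hSp.1 hSp.2 hS.2.2.1 has ha
        rw [this]
        simp
      · obtain ⟨b, hb, hbe⟩ := Multiset.mem_map.1 he
        have hb1 : b = e.2 := congrArg Prod.snd hbe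
        subst hb1
        have : bs = {e.2} := mem_rel_eq_singleton hTp.1 hTp.2 hT.2.2.1 hbs hb
        rw [this]
        simp
  | refl e => intro _; rfl
  | btrans p e h1 h2 ih1 ih2 =>
      intro he
      obtain ⟨bk, hbk, heb⟩ := mem_msum.1 he
      obtain ⟨q, hq, rfl⟩ := Multiset.mem_map.1 hbk
      have hde := tensor_descends hSp hTp (h2 q hq) e heb
      have hde' := tensor_descends hSp hTp h1 q.2 (Multiset.mem_map_of_mem _ hq)
      have hq2 : q.2 = e :=
        Prod.ext (descends_antisymm hS.1 hS.2.2.1 hde'.1 hde.1)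
          (descends_antisymm hT.1 hT.2.2.1 hde'.2 hde.2)
      have hb1 : q.1 = {e} := by
        rw [← hq2]
        exact ih2 q hq (by rwa [hq2])
      have hememe : e ∈ p.map Prod.snd := hq2 ▸ Multiset.mem_map_of_mem _ hq
      obtain ⟨q₀, hp0, hq0⟩ := Multiset.map_eq_singleton.1 (ih1 hememe)
      have hqq0 : q = q₀ := by
        have hq' := hq
        rw [hp0] at hq'
        exact Multiset.mem_singleton.1 hq'
      rw [hp0, Multiset.map_singleton, Multiset.sum_singleton, ← hqq0, hb1]

lemma tupleLE_lift_left {as bs : Multiset A} (t : B) (h : tupleLE rS as bs) :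
    tupleLE (tensorRel rS rT) (as.map fun a => (a, t)) (bs.map fun a => (a, t)) := by
  obtain ⟨p, hsnd, hfst, hrel⟩ := h
  refine ⟨p.map fun q => (q.1.map fun a => (a, t), (q.2, t)), ?_, ?_, ?_⟩
  · rw [Multiset.map_map, ← hsnd, Multiset.map_map]
    rfl
  · rw [Multiset.map_map, ← hfst, map_msum, Multiset.map_map]
    rfl
  · rintro q hq
    obtain ⟨q₀, hq₀, rfl⟩ := Multiset.mem_map.1 hq
    exact GenRel.of _ _ (Or.inl ⟨q₀.1, hrel q₀ hq₀, rfl⟩)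

lemma tupleLE_lift_right {as bs : Multiset B} (s : A) (h : tupleLE rT as bs) :
    tupleLE (tensorRel rS rT) (as.map fun b => (s, b)) (bs.map fun b => (s, b)) := by
  obtain ⟨p, hsnd, hfst, hrel⟩ := h
  refine ⟨p.map fun q => (q.1.map fun b => (s, b), (s, q.2)), ?_, ?_, ?_⟩
  · rw [Multiset.map_map, ← hsnd, Multiset.map_map]
    rfl
  · rw [Multiset.map_map, ← hfst, map_msum, Multiset.map_map]
    rfl
  · rintro q hq
    obtain ⟨q₀, hq₀, rfl⟩ := Multiset.mem_map.1 hq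
    exact GenRel.of _ _ (Or.inr ⟨q₀.1, hrel q₀ hq₀, rfl⟩)

lemma tensor_below_fork (hS : IsTree rS) (hT : IsTree rT)
    {s : A} {t : B} {ss : Multiset A} {ts : Multiset B}
    (hs : upTuple rS s ss) (ht : upTuple rT t ts) :
    ∀ {gs : Multiset (A × B)} {e : A × B}, tensorRel rS rT gs e → e = (s, t) →
      gs = {(s, t)} ∨ tupleLE (tensorRel rS rT) gs (ss.map fun a => (a, t)) ∨
        tupleLE (tensorRel rS rT) gs (ts.map fun b => (s, b)) := by
  intro gs e h
  induction h with
  | of fs e hgen =>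
      rintro rfl
      rcases hgen with ⟨as, has, rfl⟩ | ⟨bs, hbs, rfl⟩
      · by_cases hcase : as = ({s} : Multiset A)
        · left; rw [hcase]; simp
        · right; left; exact tupleLE_lift_left t (hs.2 as has hcase)
      · by_cases hcase : bs = ({t} : Multiset B)
        · left; rw [hcase]; simp
        · right; right; exact tupleLE_lift_right s (ht.2 bs hbs hcase)
  | refl e => rintro rfl; left; rfl
  | btrans p e h1 h2 ih1 ih2 =>
      rintro rfl
      have hple : tupleLE (tensorRel rS rT) ((p.map Prod.fst).sum) (p.map Prod.snd) :=
        ⟨p, rfl, rfl, h2⟩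
      rcases ih1 rfl with hcase | hcase | hcase
      · obtain ⟨q₀, hp0, hq0⟩ := Multiset.map_eq_singleton.1 hcase
        have hmem : q₀ ∈ p := by rw [hp0]; exact Multiset.mem_singleton_self q₀
        have := ih2 q₀ hmem hq0
        rwa [hp0, Multiset.map_singleton, Multiset.sum_singleton]
      · right; left; exact tupleLE_trans tensor_btrans hple hcase
      · right; right; exact tupleLE_trans tensor_btrans hple hcase

lemma not_tupleLE_LR (hS : IsTree rS) (hT : IsTree rT)
    {s : A} {t : B} {ss : Multiset A} {ts : Multiset B}
    (hs : upTuple rS s ss) (ht : upTuple rT t ts) (hns : ss ≠ 0) :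
    ¬ tupleLE (tensorRel rS rT) (ss.map fun a => (a, t)) (ts.map fun b => (s, b)) := by
  rintro ⟨q, hsnd, hfst, hrel⟩
  obtain ⟨a, ha⟩ := Multiset.exists_mem_of_ne_zero hns
  have hmem : ((a, t) : A × B) ∈ (q.map Prod.fst).sum := by
    rw [hfst]; exact Multiset.mem_map_of_mem _ ha
  obtain ⟨bk, hbk, hin⟩ := mem_msum.1 hmem
  obtain ⟨qq, hqq, rfl⟩ := Multiset.mem_map.1 hbk
  have h2 : qq.2 ∈ ts.map fun b => (s, b) := hsnd ▸ Multiset.mem_map_of_mem _ hqq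
  obtain ⟨b, hb, hq2⟩ := Multiset.mem_map.1 h2
  have hdt : descends rT t qq.2.2 := (tensor_descends hS.1.1 hT.1.1 (hrel qq hqq) _ hin).2
  have hqb : qq.2.2 = b := by rw [← hq2]
  rw [hqb] at hdt
  have hbt : descends rT b t := ⟨ts, ht.1.1, hb⟩
  have hbteq : b = t := descends_antisymm hT.1 hT.2.2.1 hbt hdt
  rw [hbteq] at hb
  exact ht.1.2 (mem_rel_eq_singleton hT.1.1.1 hT.1.1.2 hT.2.2.1 ht.1.1 hb)

lemma tensor_max_left (hS : IsTree rS) (hT : IsTree rT)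
    {s : A} {t : B} {ss : Multiset A} {ts : Multiset B}
    (hs : upTuple rS s ss) (ht : upTuple rT t ts) (hns : ss ≠ 0) :
    ∀ gs, tensorRel rS rT gs (s, t) → gs ≠ {(s, t)} →
      tupleLE (tensorRel rS rT) (ss.map fun a => (a, t)) gs →
      gs = ss.map fun a => (a, t) := by
  intro gs hgs hne hle
  have hSp : IsPreBroad rS := hS.1.1
  have hTp : IsPreBroad rT := hT.1.1
  obtain ⟨p, hpsnd, hpfst, hprel⟩ := hle
  rcases tensor_below_fork hS hT hs ht hgs rfl with h | h | h
  · exact absurd h hne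
  · -- main case : gs ≤ ss × t
    obtain ⟨q, hqsnd, hqfst, hqrel⟩ := h
    have hssnd : ss.Nodup := hS.2.2.1 _ _ hs.1.1
    have claimA : ∀ pb ∈ p, ∀ w ∈ pb.1, w = pb.2 := by
      intro pb hpb w hw
      have hwss : w ∈ ss.map fun a => (a, t) := by
        rw [← hpfst]
        exact mem_msum.2 ⟨pb.1, Multiset.mem_map_of_mem _ hpb, hw⟩
      obtain ⟨a, ha, hwa⟩ := Multiset.mem_map.1 hwss
      have hd1 := tensor_descends hSp hTp (hprel pb hpb) _ hw
      have hg : pb.2 ∈ (q.map Prod.fst).sum := by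
        rw [hqfst, ← hpsnd]
        exact Multiset.mem_map_of_mem _ hpb
      obtain ⟨bk, hbk, hin2⟩ := mem_msum.1 hg
      obtain ⟨qc, hqc, rfl⟩ := Multiset.mem_map.1 hbk
      have hd2 := tensor_descends hSp hTp (hqrel qc hqc) _ hin2
      have hq2 : qc.2 ∈ ss.map fun a => (a, t) := hqsnd ▸ Multiset.mem_map_of_mem _ hqc
      obtain ⟨a', ha', hq2e⟩ := Multiset.mem_map.1 hq2
      have e1 : descends rS a pb.2.1 := by
        have := hd1.1; rwa [← hwa] at this
      have e2 : descends rS pb.2.1 a' := by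
        have := hd2.1; rwa [← hq2e] at this
      have e3 : descends rT pb.2.2 t := by
        have := hd2.2; rw [← hq2e] at this; exact this
      have e4 : descends rT t pb.2.2 := by
        have := hd1.2; rwa [← hwa] at this
      have haa' : a = a' := tuple_mem_incomp hSp hS.2.2.1 hs.1.1 ha ha'
        (descends_trans hSp.1 hSp.2 e1 e2)
      rw [← haa'] at e2
      have h1' : pb.2.1 = a := descends_antisymm hS.1 hS.2.2.1 e2 e1
      have h2' : pb.2.2 = t := descends_antisymm hT.1 hT.2.2.1 e3 e4
      rw [← hwa]
      exact (Prod.ext h1' h2').symm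
    have hble : ∀ pb ∈ p, pb.1 ≤ ({pb.2} : Multiset (A × B)) := by
      intro pb hpb
      by_cases h0 : pb.1 = 0
      · rw [h0]; exact Multiset.zero_le _
      · obtain ⟨w, hw⟩ := Multiset.exists_mem_of_ne_zero h0
        have hwe := claimA pb hpb w hw
        rw [hwe] at hw
        exact le_of_eq (tensor_mem_eq_singleton hS hT (hprel pb hpb) hw)
    have hsub : (ss.map fun a => (a, t)) ≤ gs := by
      rw [← hpfst, ← hpsnd]
      exact sum_fst_le_map_snd hble
    have hqnd : (q.map Prod.snd).Nodup := by
      rw [hqsnd]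
      exact hssnd.map fun a₁ a₂ hh => congrArg Prod.fst hh
    have claimB : ∀ qc ∈ q, qc.1 = {qc.2} := by
      intro qc hqc
      have hq2 : qc.2 ∈ ss.map fun a => (a, t) := hqsnd ▸ Multiset.mem_map_of_mem _ hqc
      obtain ⟨a, ha, hq2e⟩ := Multiset.mem_map.1 hq2
      have hag : ((a, t) : A × B) ∈ gs :=
        Multiset.mem_of_le hsub (Multiset.mem_map_of_mem _ ha)
      have hag' : ((a, t) : A × B) ∈ (q.map Prod.fst).sum := by rwa [hqfst]
      obtain ⟨bk, hbk, hin⟩ := mem_msum.1 hag'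
      obtain ⟨qc', hqc', rfl⟩ := Multiset.mem_map.1 hbk
      have hq2' : qc'.2 ∈ ss.map fun a => (a, t) := hqsnd ▸ Multiset.mem_map_of_mem _ hqc'
      obtain ⟨a'', ha'', hq2e'⟩ := Multiset.mem_map.1 hq2'
      have hd := tensor_descends hSp hTp (hqrel qc' hqc') _ hin
      have e1 : descends rS a a'' := by
        have := hd.1; rwa [← hq2e'] at this
      have haa : a = a'' := tuple_mem_incomp hSp hS.2.2.1 hs.1.1 ha ha'' e1
      have hsndeq : qc'.2 = qc.2 := by
        rw [← hq2e', ← hq2e, ← haa]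
      have hqq : qc' = qc := Multiset.inj_on_of_nodup_map hqnd qc' hqc' qc hqc hsndeq
      rw [hqq] at hin
      have hin' : qc.2 ∈ qc.1 := by rwa [hq2e] at hin
      exact tensor_mem_eq_singleton hS hT (hqrel qc hqc) hin'
    rw [← hqfst, sum_fst_eq_map_snd claimB, hqsnd]
  · -- impossible case : gs ≤ s × ts
    exfalso
    obtain ⟨q, hqsnd, hqfst, hqrel⟩ := h
    obtain ⟨a, ha⟩ := Multiset.exists_mem_of_ne_zero hns
    have hmem : ((a, t) : A × B) ∈ (p.map Prod.fst).sum := by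
      rw [hpfst]; exact Multiset.mem_map_of_mem _ ha
    obtain ⟨bk, hbk, hin⟩ := mem_msum.1 hmem
    obtain ⟨pb, hpb, rfl⟩ := Multiset.mem_map.1 hbk
    have hd1 := tensor_descends hSp hTp (hprel pb hpb) _ hin
    have hg : pb.2 ∈ (q.map Prod.fst).sum := by
      rw [hqfst, ← hpsnd]
      exact Multiset.mem_map_of_mem _ hpb
    obtain ⟨bk2, hbk2, hin2⟩ := mem_msum.1 hg
    obtain ⟨qc, hqc, rfl⟩ := Multiset.mem_map.1 hbk2
    have hd2 := tensor_descends hSp hTp (hqrel qc hqc) _ hin2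
    have hq2 : qc.2 ∈ ts.map fun b => (s, b) := hqsnd ▸ Multiset.mem_map_of_mem _ hqc
    obtain ⟨b, hb, hq2e⟩ := Multiset.mem_map.1 hq2
    have e2 : descends rT pb.2.2 b := by
      have := hd2.2; rw [← hq2e] at this; exact this
    have e1 : descends rT t pb.2.2 := hd1.2
    have hbt : descends rT b t := ⟨ts, ht.1.1, hb⟩
    have htb : descends rT t b := descends_trans hTp.1 hTp.2 e1 e2
    have hbteq : b = t := descends_antisymm hT.1 hT.2.2.1 hbt htb
    rw [hbteq] at hb
    exact ht.1.2 (mem_rel_eq_singleton hT.1.1.1 hT.1.1.2 hT.2.2.1 ht.1.1 hb)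

lemma tensor_swap {fs : Multiset (A × B)} {e : A × B} (h : tensorRel rS rT fs e) :
    tensorRel rT rS (fs.map Prod.swap) e.swap := by
  induction h with
  | of fs e hgen =>
      apply GenRel.of
      rcases hgen with ⟨as, has, rfl⟩ | ⟨bs, hbs, rfl⟩
      · exact Or.inr ⟨as, has, by rw [Multiset.map_map]; rfl⟩
      · exact Or.inl ⟨bs, hbs, by rw [Multiset.map_map]; rfl⟩
  | refl e =>
      rw [Multiset.map_singleton]
      exact GenRel.refl e.swap
  | btrans p e h1 h2 ih1 ih2 =>
      have hsum : ((p.map fun q => (q.1.map Prod.swap, q.2.swap)).map Prod.fst).sum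
          = ((p.map Prod.fst).sum).map Prod.swap := by
        rw [Multiset.map_map, map_msum, Multiset.map_map]; rfl
      have hsnd2 : (p.map fun q => (q.1.map Prod.swap, q.2.swap)).map Prod.snd
          = (p.map Prod.snd).map Prod.swap := by
        rw [Multiset.map_map, Multiset.map_map]; rfl
      rw [← hsum]
      exact GenRel.btrans _ e.swap (by rw [hsnd2]; exact ih1)
        (by rintro q hq
            obtain ⟨q₀, h0, rfl⟩ := Multiset.mem_map.1 hq
            exact ih2 q₀ h0)

lemma tupleLE_tensor_swap {xs ys : Multiset (A × B)}
    (h : tupleLE (tensorRel rS rT) xs ys) :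
    tupleLE (tensorRel rT rS) (xs.map Prod.swap) (ys.map Prod.swap) := by
  obtain ⟨p, hsnd, hfst, hrel⟩ := h
  refine ⟨p.map fun q => (q.1.map Prod.swap, q.2.swap), ?_, ?_, ?_⟩
  · rw [Multiset.map_map, ← hsnd, Multiset.map_map]; rfl
  · rw [Multiset.map_map, ← hfst, map_msum, Multiset.map_map]; rfl
  · rintro q hq
    obtain ⟨q₀, h0, rfl⟩ := Multiset.mem_map.1 hq
    exact tensor_swap (hrel q₀ h0)

end AuxTensor

end BroadPaper

namespace BroadPaper

/-- `fs` is a maximal tuple strictly below `e` for the relation `R`. -/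
def IsMaxBelow {X : Type u} (R : Rel X) (e : X) (fs : Multiset X) : Prop :=
  (R fs e ∧ fs ≠ ({e} : Multiset X)) ∧
    ∀ gs, R gs e → gs ≠ ({e} : Multiset X) → tupleLE R fs gs → gs = fs

/-- At a fork `e = (s,t)` of `S ⊗ T` (both coordinates
nodes) there are exactly two maximal tuples strictly below `e`, namely
`s^↑ × t` and `s × t^↑`; in particular neither is `≤` the other. -/
theorem stmt13 {A B : Type u} (rS : Rel A) (rT : Rel B)
    (hS : IsTree rS) (hT : IsTree rT) (s : A) (t : B)
    (ss : Multiset A) (ts : Multiset B)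
    (hs : upTuple rS s ss) (hns : ss ≠ 0)
    (ht : upTuple rT t ts) (hnt : ts ≠ 0) :
    IsMaxBelow (tensorRel rS rT) (s, t) (ss.map fun a => (a, t)) ∧
    IsMaxBelow (tensorRel rS rT) (s, t) (ts.map fun b => (s, b)) ∧
    (ss.map fun a => (a, t)) ≠ (ts.map fun b => (s, b)) ∧
    (∀ fs, IsMaxBelow (tensorRel rS rT) (s, t) fs →
      fs = (ss.map fun a => (a, t)) ∨ fs = (ts.map fun b => (s, b))) ∧
    ¬ tupleLE (tensorRel rS rT) (ss.map fun a => (a, t))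
        (ts.map fun b => (s, b)) ∧
    ¬ tupleLE (tensorRel rS rT) (ts.map fun b => (s, b))
        (ss.map fun a => (a, t)) := by
  classical
  have relL : tensorRel rS rT (ss.map fun a => (a, t)) (s, t) :=
    GenRel.of _ _ (Or.inl ⟨ss, hs.1.1, rfl⟩)
  have relR : tensorRel rS rT (ts.map fun b => (s, b)) (s, t) :=
    GenRel.of _ _ (Or.inr ⟨ts, ht.1.1, rfl⟩)
  have neL : (ss.map fun a => (a, t)) ≠ ({(s, t)} : Multiset (A × B)) := by
    intro h
    obtain ⟨a, hss, hpair⟩ := Multiset.map_eq_singleton.1 h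
    have ha : a = s := congrArg Prod.fst hpair
    rw [ha] at hss
    exact hs.1.2 hss
  have neR : (ts.map fun b => (s, b)) ≠ ({(s, t)} : Multiset (A × B)) := by
    intro h
    obtain ⟨b, hts, hpair⟩ := Multiset.map_eq_singleton.1 h
    have hb : b = t := congrArg Prod.snd hpair
    rw [hb] at hts
    exact ht.1.2 hts
  have maxL := tensor_max_left hS hT hs ht hns
  have maxR : ∀ gs, tensorRel rS rT gs (s, t) → gs ≠ {(s, t)} →
      tupleLE (tensorRel rS rT) (ts.map fun b => (s, b)) gs →
      gs = ts.map fun b => (s, b) := by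
    intro gs h1 h2 h3
    have h1' : tensorRel rT rS (gs.map Prod.swap) (t, s) := tensor_swap h1
    have h2' : gs.map Prod.swap ≠ ({(t, s)} : Multiset (B × A)) := by
      intro h
      obtain ⟨w, hgs', hw⟩ := Multiset.map_eq_singleton.1 h
      apply h2
      rw [hgs']
      have hws : w = (s, t) := by
        have := congrArg Prod.swap hw
        rwa [Prod.swap_swap] at this
      rw [hws]
    have h3' : tupleLE (tensorRel rT rS) (ts.map fun b => (b, s)) (gs.map Prod.swap) := by
      have := tupleLE_tensor_swap h3
      rwa [Multiset.map_map] at this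
    have hres := tensor_max_left hT hS ht hs hnt (gs.map Prod.swap) h1' h2' h3'
    have h4 := congrArg (Multiset.map Prod.swap) hres
    rw [Multiset.map_map, Multiset.map_map] at h4
    simpa [Function.comp_def] using h4
  have notLR := not_tupleLE_LR hS hT hs ht hns
  have notRL : ¬ tupleLE (tensorRel rS rT) (ts.map fun b => (s, b))
      (ss.map fun a => (a, t)) := by
    intro h
    have hsw := tupleLE_tensor_swap h
    rw [Multiset.map_map, Multiset.map_map] at hsw
    exact not_tupleLE_LR hT hS ht hs hnt hsw
  have neq : (ss.map fun a => (a, t)) ≠ ts.map fun b => (s, b) := by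
    intro h
    obtain ⟨a, ha⟩ := Multiset.exists_mem_of_ne_zero hns
    have hmem : ((a, t) : A × B) ∈ ts.map fun b => (s, b) := by
      rw [← h]; exact Multiset.mem_map_of_mem _ ha
    obtain ⟨b, hb, hpair⟩ := Multiset.mem_map.1 hmem
    have has : a = s := (congrArg Prod.fst hpair).symm
    rw [has] at ha
    exact hs.1.2 (mem_rel_eq_singleton hS.1.1.1 hS.1.1.2 hS.2.2.1 hs.1.1 ha)
  refine ⟨⟨⟨relL, neL⟩, fun gs h1 h2 h3 => maxL gs h1 h2 h3⟩,
    ⟨⟨relR, neR⟩, fun gs h1 h2 h3 => maxR gs h1 h2 h3⟩, neq, ?_, notLR, notRL⟩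
  intro fs hfs
  obtain ⟨⟨h1, h2⟩, hmax⟩ := hfs
  rcases tensor_below_fork hS hT hs ht h1 rfl with h | h | h
  · exact absurd h h2
  · exact Or.inl (hmax _ relL neL h).symm
  · exact Or.inr (hmax _ relR neR h).symm


end BroadPaper
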